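/- Let X be a nontrivial real Banach space. For every t ∈ [0, 1/2], C_Z^I(t) ≤ (1 − t)² + (1 − 2t)(1 − t)·H̃(X) + ((1 − 2t)²/2)·C_NJ(X). -/
import Mathlib


open Set

/-- `C_Z^I(t)`: the sup of `‖t•x + (1-t)•y‖ * ‖(1-t)•x + t•y‖ / ‖x+y‖²` over
pairs `(x, y) ≠ (0, 0)` that are isosceles orthogonal (`‖x+y‖ = ‖x-y‖`). -/
noncomputable def CZI (X : Type*) [NormedAddCommGroup X] [NormedSpace ℝ X] (t : ℝ) : ℝ :=
  sSup { r : ℝ | ∃ x y : X, (x, y) ≠ (0, 0) ∧ ‖x + y‖ = ‖x - y‖ ∧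
    r = ‖t • x + (1 - t) • y‖ * ‖(1 - t) • x + t • y‖ / ‖x + y‖ ^ 2 }

/-- The constant `H̃(X)`. -/
noncomputable def Htilde (X : Type*) [NormedAddCommGroup X] [NormedSpace ℝ X] : ℝ :=
  sSup { r : ℝ | ∃ x y : X, (x, y) ≠ (0, 0) ∧ ‖x + y‖ = ‖x - y‖ ∧
    r = (‖x‖ + ‖y‖) / ‖x + y‖ }

/-- The von Neumann–Jordan constant `C_NJ(X)`. -/
noncomputable def CNJ (X : Type*) [NormedAddCommGroup X] [NormedSpace ℝ X] : ℝ :=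
  sSup { r : ℝ | ∃ x y : X, (x, y) ≠ (0, 0) ∧
    r = (‖x + y‖ ^ 2 + ‖x - y‖ ^ 2) / (2 * (‖x‖ ^ 2 + ‖y‖ ^ 2)) }

theorem stmt_10 (X : Type*) [NormedAddCommGroup X] [NormedSpace ℝ X]
    [CompleteSpace X] [Nontrivial X] :
    ∀ t ∈ Icc (0 : ℝ) (1 / 2),
      CZI X t ≤ (1 - t) ^ 2 + (1 - 2 * t) * (1 - t) * Htilde X +
        ((1 - 2 * t) ^ 2 / 2) * CNJ X := by
  rintro t ⟨ht0, ht2⟩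
  have ht1 : (0:ℝ) ≤ 1 - t := by linarith
  have ht3 : (0:ℝ) ≤ 1 - 2 * t := by linarith
  -- Htilde set bounded above by 2
  have hHb : BddAbove { r : ℝ | ∃ x y : X, (x, y) ≠ (0, 0) ∧ ‖x + y‖ = ‖x - y‖ ∧
      r = (‖x‖ + ‖y‖) / ‖x + y‖ } := by
    refine ⟨2, ?_⟩
    rintro r ⟨x, y, hxy, hiso, rfl⟩
    rcases eq_or_ne (x + y) 0 with h | h
    · simp [h]
    · have hs : 0 < ‖x + y‖ := norm_pos_iff.mpr h
      have hx : ‖x‖ ≤ ‖x + y‖ := by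
        have h2 : ‖(2:ℝ) • x‖ = 2 * ‖x‖ := by
          rw [norm_smul]; simp
        have h3 : (2:ℝ) • x = (x + y) + (x - y) := by module
        have h4 := norm_add_le (x + y) (x - y)
        rw [← h3, h2] at h4
        linarith [hiso ▸ h4]
      have hy : ‖y‖ ≤ ‖x + y‖ := by
        have h2 : ‖(2:ℝ) • y‖ = 2 * ‖y‖ := by
          rw [norm_smul]; simp
        have h3 : (2:ℝ) • y = (x + y) - (x - y) := by module
        have h4 := norm_sub_le (x + y) (x - y)
        rw [← h3, h2] at h4
        linarith [hiso ▸ h4]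
      rw [div_le_iff₀ hs]
      linarith
  -- CNJ set bounded above by 2
  have hNb : BddAbove { r : ℝ | ∃ x y : X, (x, y) ≠ (0, 0) ∧
      r = (‖x + y‖ ^ 2 + ‖x - y‖ ^ 2) / (2 * (‖x‖ ^ 2 + ‖y‖ ^ 2)) } := by
    refine ⟨2, ?_⟩
    rintro r ⟨x, y, hxy, rfl⟩
    have hden : 0 < ‖x‖ ^ 2 + ‖y‖ ^ 2 := by
      have hor : x ≠ 0 ∨ y ≠ 0 := by
        by_contra hc
        push_neg at hc
        exact hxy (by simp [hc.1, hc.2])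
      rcases hor with h | h
      · have : 0 < ‖x‖ := norm_pos_iff.mpr h
        positivity
      · have : 0 < ‖y‖ := norm_pos_iff.mpr h
        positivity
    have h1 := norm_add_le x y
    have h2 := norm_sub_le x y
    rw [div_le_iff₀ (by linarith)]
    nlinarith [sq_nonneg (‖x‖ - ‖y‖), norm_nonneg x, norm_nonneg y, norm_nonneg (x+y), norm_nonneg (x-y)]
  have hHnn : 0 ≤ Htilde X := Real.sSup_nonneg (by
    rintro r ⟨x, y, hxy, hiso, rfl⟩; positivity)
  have hNnn : 0 ≤ CNJ X := Real.sSup_nonneg (by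
    rintro r ⟨x, y, hxy, rfl⟩; positivity)
  apply Real.sSup_le
  · rintro r ⟨x, y, hxy, hiso, rfl⟩
    have hne : x + y ≠ 0 := by
      intro h
      have h1 : ‖x - y‖ = 0 := by rw [← hiso, h, norm_zero]
      have h2 : x - y = 0 := norm_eq_zero.mp h1
      have hx : x = 0 := by
        have h3 : (2:ℝ) • x = (x + y) + (x - y) := by module
        rw [h, h2, add_zero] at h3
        simpa using h3
      have hy : y = 0 := by
        have h3 : (2:ℝ) • y = (x + y) - (x - y) := by module
        rw [h, h2, sub_zero] at h3
        simpa using h3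
      exact hxy (by simp [hx, hy])
    have hs : 0 < ‖x + y‖ := norm_pos_iff.mpr hne
    set s := ‖x + y‖ with hs_def
    -- bound via Htilde
    have hH : (‖x‖ + ‖y‖) / s ≤ Htilde X :=
      le_csSup hHb ⟨x, y, hxy, hiso, rfl⟩
    have hH' : ‖x‖ + ‖y‖ ≤ Htilde X * s := (div_le_iff₀ hs).mp hH
    -- bound via CNJ with the pair (x+y, x-y)
    have e1 : ‖(x + y) + (x - y)‖ = 2 * ‖x‖ := by
      rw [show (x + y) + (x - y) = (2:ℝ) • x by module, norm_smul]; simp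
    have e2 : ‖(x + y) - (x - y)‖ = 2 * ‖y‖ := by
      rw [show (x + y) - (x - y) = (2:ℝ) • y by module, norm_smul]; simp
    have hN : (‖x‖ ^ 2 + ‖y‖ ^ 2) / s ^ 2 ≤ CNJ X := by
      have hmem : (‖x‖ ^ 2 + ‖y‖ ^ 2) / s ^ 2 ∈ { r : ℝ | ∃ u v : X, (u, v) ≠ (0, 0) ∧
          r = (‖u + v‖ ^ 2 + ‖u - v‖ ^ 2) / (2 * (‖u‖ ^ 2 + ‖v‖ ^ 2)) } := by
        refine ⟨x + y, x - y, ?_, ?_⟩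
        · simp [Prod.ext_iff, hne]
        · rw [e1, e2, ← hiso, ← hs_def]
          field_simp
          ring
      exact le_csSup hNb hmem
    have hN' : ‖x‖ ^ 2 + ‖y‖ ^ 2 ≤ CNJ X * s ^ 2 := (div_le_iff₀ (by positivity)).mp hN
    -- triangle inequality bounds
    have hA : ‖t • x + (1 - t) • y‖ ≤ (1 - t) * s + (1 - 2 * t) * ‖x‖ := by
      calc ‖t • x + (1 - t) • y‖ = ‖(1 - t) • (x + y) - (1 - 2 * t) • x‖ := by
            congr 1; module
        _ ≤ ‖(1 - t) • (x + y)‖ + ‖(1 - 2 * t) • x‖ := norm_sub_le _ _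
        _ = (1 - t) * s + (1 - 2 * t) * ‖x‖ := by
            rw [norm_smul, norm_smul, Real.norm_of_nonneg ht1, Real.norm_of_nonneg ht3]
    have hB : ‖(1 - t) • x + t • y‖ ≤ (1 - t) * s + (1 - 2 * t) * ‖y‖ := by
      calc ‖(1 - t) • x + t • y‖ = ‖(1 - t) • (x + y) - (1 - 2 * t) • y‖ := by
            congr 1; module
        _ ≤ ‖(1 - t) • (x + y)‖ + ‖(1 - 2 * t) • y‖ := norm_sub_le _ _
        _ = (1 - t) * s + (1 - 2 * t) * ‖y‖ := by
            rw [norm_smul, norm_smul, Real.norm_of_nonneg ht1, Real.norm_of_nonneg ht3]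
    rw [div_le_iff₀ (by positivity : (0:ℝ) < s ^ 2)]
    nlinarith [mul_le_mul hA hB (norm_nonneg _) (by positivity),
      mul_le_mul_of_nonneg_left hH' (mul_nonneg (mul_nonneg ht3 ht1) hs.le),
      mul_le_mul_of_nonneg_left hN' (by positivity : (0:ℝ) ≤ (1 - 2 * t) ^ 2 / 2),
      mul_nonneg (sq_nonneg (1 - 2 * t)) (sq_nonneg (‖x‖ - ‖y‖)),
      norm_nonneg x, norm_nonneg y, hs]
  · have h1 : 0 ≤ (1 - 2 * t) * (1 - t) * Htilde X :=
      mul_nonneg (mul_nonneg ht3 ht1) hHnn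
    have h2 : 0 ≤ ((1 - 2 * t) ^ 2 / 2) * CNJ X :=
      mul_nonneg (by positivity) hNnn
    nlinarith [sq_nonneg (1 - t)]
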